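/- Let V_1, V_2, V_3, V_4 be 2-dimensional subspaces of E = F_2^4 that are pairwise trivially intersecting, so E = V_1 ⊕ V_2, and for j = 3,4 let α_j : V_1 → V_2 be the unique linear map with V_j = {x + α_j(x) : x ∈ V_1}. If V_1,...,V_4 extend to a 2-spread V_1,...,V_5, then α_3 + α_4 is an isomorphism and V_5 = {x + (α_3+α_4)(x) : x ∈ V_1}. -/

import Mathlib

open Matrix

variable {F : Type*} [Field F]

/-- Column space of a matrix: the span of its columns. -/
def colSpace {n m : ℕ} (M : Matrix (Fin n) (Fin m) F) : Submodule F (Fin n → F) :=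
  Submodule.span F (Set.range Mᵀ)

lemma colSpace_le_iff {n m : ℕ} (M : Matrix (Fin n) (Fin m) F) (U : Submodule F (Fin n → F)) :
    colSpace M ≤ U ↔ ∀ j, Mᵀ j ∈ U := by
  rw [colSpace, Submodule.span_le]
  exact ⟨fun h j => h ⟨j, rfl⟩, fun h => by rintro _ ⟨j, rfl⟩; exact h j⟩

/-- `C(U)`: the codewords of `C` whose column space is contained in `U`. -/
def codeCU {n m : ℕ} (C : Submodule F (Matrix (Fin n) (Fin m) F))
    (U : Submodule F (Fin n → F)) : Submodule F (Matrix (Fin n) (Fin m) F) where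
  carrier := {M | M ∈ C ∧ colSpace M ≤ U}
  add_mem' := by
    rintro a b ⟨haC, ha⟩ ⟨hbC, hb⟩
    refine ⟨C.add_mem haC hbC, (colSpace_le_iff _ _).2 fun j => ?_⟩
    have h := U.add_mem ((colSpace_le_iff a U).1 ha j) ((colSpace_le_iff b U).1 hb j)
    rw [Matrix.transpose_add]; convert h using 1
    funext k; simp
  zero_mem' := by
    exact ⟨C.zero_mem, (colSpace_le_iff _ _).2 fun j => U.zero_mem⟩
  smul_mem' := by
    rintro c a ⟨haC, ha⟩
    refine ⟨C.smul_mem c haC, (colSpace_le_iff _ _).2 fun j => ?_⟩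
    have h := U.smul_mem c ((colSpace_le_iff a U).1 ha j)
    rw [Matrix.transpose_smul]; convert h using 1
    funext k; simp

/-- Orthogonal complement with respect to the standard (dot-product) bilinear form. -/
def perp {n : ℕ} (U : Submodule F (Fin n → F)) : Submodule F (Fin n → F) where
  carrier := {v | ∀ u ∈ U, v ⬝ᵥ u = 0}
  add_mem' := by
    intro a b ha hb u hu
    rw [add_dotProduct, ha u hu, hb u hu, add_zero]
  zero_mem' := by
    intro u hu
    rw [zero_dotProduct]
  smul_mem' := by
    intro c a ha u hu
    rw [smul_dotProduct, ha u hu, smul_zero]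

/-- The minimum rank distance of a matrix code. -/
noncomputable def minRankDist {n m : ℕ} (C : Submodule F (Matrix (Fin n) (Fin m) F)) : ℕ :=
  sInf {r : ℕ | ∃ M ∈ C, M ≠ 0 ∧ M.rank = r}

/-- The rank function of the q-polymatroid associated to a matrix rank-metric code. -/
noncomputable def rhoCode {n m : ℕ} (C : Submodule F (Matrix (Fin n) (Fin m) F))
    (U : Submodule F (Fin n → F)) : ℚ :=
  ((Module.finrank F C : ℚ) - (Module.finrank F (codeCU C (perp U)) : ℚ)) / (m : ℚ)

lemma neg_eq_self_mod2 {M : Type*} [AddCommGroup M] [Module (ZMod 2) M] (a : M) : -a = a := by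
  have h : a + a = 0 := by
    rw [← two_smul (ZMod 2) a, show (2 : ZMod 2) = 0 from rfl, zero_smul]
  exact neg_eq_of_add_eq_zero_left h

/-- in a 2-spread `V_1,...,V_5` of `F_2^4`, if `V_3, V_4` are the graphs of
linear maps `α_3, α_4 : V_1 → V_2`, then `α_3 + α_4` is an isomorphism and `V_5` is its
graph. -/
theorem spread_graph_sum
    (V : Fin 5 → Submodule (ZMod 2) (Fin 4 → ZMod 2))
    (hdim : ∀ i, Module.finrank (ZMod 2) (V i) = 2)
    (hdisj : ∀ i j, i ≠ j → V i ⊓ V j = ⊥)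
    (hcover : ∀ v : Fin 4 → ZMod 2, v ≠ 0 → ∃ i, v ∈ V i)
    (hcompl : V 0 ⊔ V 1 = ⊤)
    (α₃ α₄ : ↥(V 0) →ₗ[ZMod 2] ↥(V 1))
    (h3 : (V 2 : Set (Fin 4 → ZMod 2)) =
      {y | ∃ x : ↥(V 0), y = (x : Fin 4 → ZMod 2) + ((α₃ x : ↥(V 1)) : Fin 4 → ZMod 2)})
    (h4 : (V 3 : Set (Fin 4 → ZMod 2)) =
      {y | ∃ x : ↥(V 0), y = (x : Fin 4 → ZMod 2) + ((α₄ x : ↥(V 1)) : Fin 4 → ZMod 2)}) :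
    Function.Bijective ⇑(α₃ + α₄) ∧
    (V 4 : Set (Fin 4 → ZMod 2)) =
      {y | ∃ x : ↥(V 0), y = (x : Fin 4 → ZMod 2) + (((α₃ + α₄) x : ↥(V 1)) : Fin 4 → ZMod 2)} := by
  set β : ↥(V 0) →ₗ[ZMod 2] ↥(V 1) := α₃ + α₄ with hβdef
  have h01 : ∀ (a b : Fin 4 → ZMod 2), a ∈ V 0 → b ∈ V 1 → a = b → a = 0 := by
    intro a b ha hb hab
    have : a ∈ V 0 ⊓ V 1 := ⟨ha, hab ▸ hb⟩
    rwa [hdisj 0 1 (by decide)] at this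
  have h01' : ∀ (x : ↥(V 0)) (y : ↥(V 1)),
      (x : Fin 4 → ZMod 2) + (y : Fin 4 → ZMod 2) = 0 → x = 0 := by
    intro x y hxy
    have hx : (x : Fin 4 → ZMod 2) = (y : Fin 4 → ZMod 2) := by
      have := eq_neg_of_add_eq_zero_left hxy
      rwa [neg_eq_self_mod2] at this
    exact Subtype.ext (h01 _ _ x.2 y.2 hx)
  have key : ∀ x : ↥(V 0), β x = 0 → x = 0 := by
    intro x hx
    have h34 : α₃ x = α₄ x := by
      have h' : α₃ x + α₄ x = 0 := by simpa [hβdef] using hx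
      have := eq_neg_of_add_eq_zero_left h'
      rwa [neg_eq_self_mod2] at this
    have hm2 : ((x : Fin 4 → ZMod 2) + ((α₃ x : ↥(V 1)) : Fin 4 → ZMod 2)) ∈ V 2 := by
      show _ ∈ (V 2 : Set (Fin 4 → ZMod 2))
      rw [h3]; exact ⟨x, rfl⟩
    have hm3 : ((x : Fin 4 → ZMod 2) + ((α₃ x : ↥(V 1)) : Fin 4 → ZMod 2)) ∈ V 3 := by
      show _ ∈ (V 3 : Set (Fin 4 → ZMod 2))
      rw [h4]; exact ⟨x, by rw [h34]⟩
    have hz : ((x : Fin 4 → ZMod 2) + ((α₃ x : ↥(V 1)) : Fin 4 → ZMod 2)) = 0 := by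
      have hmem : _ ∈ V 2 ⊓ V 3 := ⟨hm2, hm3⟩
      rwa [hdisj 2 3 (by decide)] at hmem
    exact h01' x (α₃ x) hz
  have hβinj : Function.Injective β := by
    rw [← LinearMap.ker_eq_bot, LinearMap.ker_eq_bot']
    exact key
  have hβsurj : Function.Surjective β := by
    rw [← LinearMap.range_eq_top]
    apply Submodule.eq_top_of_finrank_eq
    rw [LinearMap.finrank_range_of_inj hβinj, hdim 0, hdim 1]
  set φ : ↥(V 0) →ₗ[ZMod 2] (Fin 4 → ZMod 2) :=
    (V 0).subtype + (V 1).subtype.comp β with hφdef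
  have hφ : ∀ x : ↥(V 0), φ x = (x : Fin 4 → ZMod 2) + ((β x : ↥(V 1)) : Fin 4 → ZMod 2) :=
    fun x => rfl
  have hφinj : Function.Injective φ := by
    rw [← LinearMap.ker_eq_bot, LinearMap.ker_eq_bot']
    intro x hx
    exact h01' x (β x) (by rw [← hφ]; exact hx)
  have hle : LinearMap.range φ ≤ V 4 := by
    rintro y ⟨x, rfl⟩
    by_cases hx0 : x = 0
    · simp [hx0]
    have hne : φ x ≠ 0 := fun h => hx0 (hφinj (by rw [h, map_zero]))
    obtain ⟨i, hi⟩ := hcover (φ x) hne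
    have hi4 : i = 4 := by
      fin_cases i
      · exfalso
        have hb : ((β x : ↥(V 1)) : Fin 4 → ZMod 2) ∈ V 0 := by
          have heq : ((β x : ↥(V 1)) : Fin 4 → ZMod 2) = φ x - (x : Fin 4 → ZMod 2) := by
            rw [hφ]; abel
          rw [heq]; exact (V 0).sub_mem hi x.2
        have := h01 _ _ hb (β x).2 rfl
        exact hx0 (key x (Subtype.ext this))
      · exfalso
        have hb : (x : Fin 4 → ZMod 2) ∈ V 1 := by
          have heq : (x : Fin 4 → ZMod 2) = φ x - ((β x : ↥(V 1)) : Fin 4 → ZMod 2) := by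
            rw [hφ]; abel
          rw [heq]; exact (V 1).sub_mem hi (β x).2
        exact hx0 (Subtype.ext (h01 _ _ x.2 hb rfl))
      · exfalso
        have hmem : φ x ∈ (V 2 : Set (Fin 4 → ZMod 2)) := hi
        rw [h3] at hmem
        obtain ⟨x', hx'⟩ := hmem
        rw [hφ] at hx'
        have hd : (x : Fin 4 → ZMod 2) - (x' : Fin 4 → ZMod 2)
            = ((α₃ x' : ↥(V 1)) : Fin 4 → ZMod 2) - ((β x : ↥(V 1)) : Fin 4 → ZMod 2) := by
          linear_combination hx'
        have h0 : (x : Fin 4 → ZMod 2) - (x' : Fin 4 → ZMod 2) = 0 :=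
          h01 _ _ ((V 0).sub_mem x.2 x'.2) ((V 1).sub_mem (α₃ x').2 (β x).2) hd
        have hxx' : x = x' := Subtype.ext (by rwa [sub_eq_zero] at h0)
        have hba : β x = α₃ x := by
          have hd0 : ((α₃ x' : ↥(V 1)) : Fin 4 → ZMod 2)
              - ((β x : ↥(V 1)) : Fin 4 → ZMod 2) = 0 := by rw [← hd, h0]
          have hsub : α₃ x' = β x := Subtype.ext (sub_eq_zero.mp hd0)
          rw [← hsub, hxx']
        have hα4 : α₄ x = 0 := by
          have heq2 : α₃ x + α₄ x = α₃ x := hba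
          exact (add_eq_left).mp heq2
        have hm : (x : Fin 4 → ZMod 2) ∈ (V 3 : Set (Fin 4 → ZMod 2)) := by
          rw [h4]; exact ⟨x, by rw [hα4]; simp⟩
        have hmem2 : (x : Fin 4 → ZMod 2) ∈ V 3 ⊓ V 0 := ⟨hm, x.2⟩
        rw [hdisj 3 0 (by decide)] at hmem2
        exact hx0 (Subtype.ext hmem2)
      · exfalso
        have hmem : φ x ∈ (V 3 : Set (Fin 4 → ZMod 2)) := hi
        rw [h4] at hmem
        obtain ⟨x', hx'⟩ := hmem
        rw [hφ] at hx'
        have hd : (x : Fin 4 → ZMod 2) - (x' : Fin 4 → ZMod 2)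
            = ((α₄ x' : ↥(V 1)) : Fin 4 → ZMod 2) - ((β x : ↥(V 1)) : Fin 4 → ZMod 2) := by
          linear_combination hx'
        have h0 : (x : Fin 4 → ZMod 2) - (x' : Fin 4 → ZMod 2) = 0 :=
          h01 _ _ ((V 0).sub_mem x.2 x'.2) ((V 1).sub_mem (α₄ x').2 (β x).2) hd
        have hxx' : x = x' := Subtype.ext (by rwa [sub_eq_zero] at h0)
        have hba : β x = α₄ x := by
          have hd0 : ((α₄ x' : ↥(V 1)) : Fin 4 → ZMod 2)
              - ((β x : ↥(V 1)) : Fin 4 → ZMod 2) = 0 := by rw [← hd, h0]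
          have hsub : α₄ x' = β x := Subtype.ext (sub_eq_zero.mp hd0)
          rw [← hsub, hxx']
        have hα3 : α₃ x = 0 := by
          have heq2 : α₃ x + α₄ x = α₄ x := hba
          exact (add_eq_right).mp heq2
        have hm : (x : Fin 4 → ZMod 2) ∈ (V 2 : Set (Fin 4 → ZMod 2)) := by
          rw [h3]; exact ⟨x, by rw [hα3]; simp⟩
        have hmem2 : (x : Fin 4 → ZMod 2) ∈ V 2 ⊓ V 0 := ⟨hm, x.2⟩
        rw [hdisj 2 0 (by decide)] at hmem2
        exact hx0 (Subtype.ext hmem2)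
      · rfl
    rw [hi4] at hi
    exact hi
  have heq : LinearMap.range φ = V 4 := by
    apply Submodule.eq_of_le_of_finrank_le hle
    rw [LinearMap.finrank_range_of_inj hφinj, hdim 0, hdim 4]
  refine ⟨⟨hβinj, hβsurj⟩, ?_⟩
  rw [← heq]
  ext y
  simp only [SetLike.mem_coe, LinearMap.mem_range, Set.mem_setOf_eq]
  constructor
  · rintro ⟨x, rfl⟩; exact ⟨x, (hφ x).symm⟩
  · rintro ⟨x, rfl⟩; exact ⟨x, hφ x⟩
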